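/- Let L be a nonnegative integer and let 0 < x < π/2. Then T_L(1/cos(x)) ≥ (1/2) e^{Lx}. -/

import Mathlib

open Real

lemma T_real_cosh (t : ℝ) (n : ℤ) :
    (Polynomial.Chebyshev.T ℝ n).eval (Real.cosh t) = Real.cosh (n * t) := by
  have h := Polynomial.Chebyshev.T_complex_cos (t * Complex.I) n
  have hmap : Polynomial.map (Complex.ofRealHom) (Polynomial.Chebyshev.T ℝ n)
      = Polynomial.Chebyshev.T ℂ n := Polynomial.Chebyshev.map_T _ n
  have : (Complex.ofReal ((Polynomial.Chebyshev.T ℝ n).eval (Real.cosh t)))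
      = Real.cosh (n * t) := by
    calc (Complex.ofReal ((Polynomial.Chebyshev.T ℝ n).eval (Real.cosh t)))
        = (Polynomial.Chebyshev.T ℂ n).eval ((Real.cosh t : ℝ) : ℂ) := by
          rw [← hmap, Polynomial.eval_map]
          exact (Polynomial.eval₂_at_apply Complex.ofRealHom _).symm
      _ = (Polynomial.Chebyshev.T ℂ n).eval (Complex.cos (t * Complex.I)) := by
          rw [Complex.cos_mul_I, Complex.ofReal_cosh]
      _ = Complex.cos (n * (t * Complex.I)) := h
      _ = Complex.cosh (n * t) := by
          rw [← Complex.cos_mul_I]; ring_nf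
      _ = ((Real.cosh (n * t) : ℝ) : ℂ) := by
          rw [Complex.ofReal_cosh]; norm_cast
  exact_mod_cast this


lemma cosh_mul_cos_le_one {x : ℝ} (hx0 : 0 ≤ x) (hx : x ≤ π / 2) :
    Real.cosh x * Real.cos x ≤ 1 := by
  -- g y = cosh y * sin y - sinh y * cos y is monotone on [0, π/2]
  set g : ℝ → ℝ := fun y => Real.cosh y * Real.sin y - Real.sinh y * Real.cos y with hg_def
  have hgd : ∀ y : ℝ, HasDerivAt g (2 * (Real.sinh y * Real.sin y)) y := by
    intro y
    have h1 := (Real.hasDerivAt_cosh y).mul (Real.hasDerivAt_sin y)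
    have h2 := (Real.hasDerivAt_sinh y).mul (Real.hasDerivAt_cos y)
    have := h1.sub h2
    refine this.congr_deriv ?_
    ring
  have hgmono : MonotoneOn g (Set.Icc 0 (π / 2)) := by
    apply monotoneOn_of_deriv_nonneg (convex_Icc _ _)
    · exact (Continuous.sub ((Real.continuous_cosh).mul Real.continuous_sin)
        ((Real.continuous_sinh).mul Real.continuous_cos)).continuousOn
    · intro y _
      exact ((hgd y).differentiableAt).differentiableWithinAt
    · intro y hy
      rw [interior_Icc] at hy
      rw [(hgd y).deriv]
      have hs : 0 ≤ Real.sinh y := Real.sinh_nonneg_iff.mpr hy.1.le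
      have hsin : 0 ≤ Real.sin y := Real.sin_nonneg_of_nonneg_of_le_pi hy.1.le
        (by linarith [Real.pi_pos, hy.2])
      positivity
  have hg_nonneg : ∀ y ∈ Set.Icc (0:ℝ) (π / 2), 0 ≤ g y := by
    intro y hy
    have := hgmono (Set.left_mem_Icc.mpr (by positivity)) hy hy.1
    simpa [hg_def] using this
  -- f y = 1 - cosh y * cos y is monotone on [0, π/2]
  set f : ℝ → ℝ := fun y => 1 - Real.cosh y * Real.cos y with hf_def
  have hfd : ∀ y : ℝ, HasDerivAt f (g y) y := by
    intro y
    have h1 := (Real.hasDerivAt_cosh y).mul (Real.hasDerivAt_cos y)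
    have := (hasDerivAt_const y (1:ℝ)).sub h1
    refine this.congr_deriv ?_
    simp [hg_def]
    ring
  have hfmono : MonotoneOn f (Set.Icc 0 (π / 2)) := by
    apply monotoneOn_of_deriv_nonneg (convex_Icc _ _)
    · exact (continuous_const.sub ((Real.continuous_cosh).mul Real.continuous_cos)).continuousOn
    · intro y _
      exact ((hfd y).differentiableAt).differentiableWithinAt
    · intro y hy
      rw [interior_Icc] at hy
      rw [(hfd y).deriv]
      exact hg_nonneg y ⟨hy.1.le, hy.2.le⟩
  have := hfmono (Set.left_mem_Icc.mpr (by positivity)) ⟨hx0, hx⟩ hx0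
  simp only [hf_def, Real.cosh_zero, Real.cos_zero, mul_one] at this
  linarith

theorem stmt_4 (L : ℕ) (x : ℝ) (hx0 : 0 < x) (hx : x < π / 2) :
    (1 / 2) * Real.exp (L * x) ≤ (Polynomial.Chebyshev.T ℝ L).eval (1 / Real.cos x) := by
  have hcos : 0 < Real.cos x := Real.cos_pos_of_mem_Ioo ⟨by linarith [Real.pi_pos], hx⟩
  set y : ℝ := 1 / Real.cos x with hy_def
  have hyx : Real.cosh x ≤ y := by
    rw [hy_def, le_div_iff₀ hcos]
    exact cosh_mul_cos_le_one hx0.le hx.le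
  have hy1 : 1 ≤ y := le_trans (Real.one_le_cosh x) hyx
  set s : ℝ := Real.sqrt (y ^ 2 - 1) with hs_def
  have hs_sq : s ^ 2 = y ^ 2 - 1 := Real.sq_sqrt (by nlinarith)
  have hs0 : 0 ≤ s := Real.sqrt_nonneg _
  set t : ℝ := Real.log (y + s) with ht_def
  have ha1 : 1 ≤ y + s := by linarith
  have ha0 : 0 < y + s := by linarith
  have hexp : Real.exp t = y + s := Real.exp_log ha0
  have hexpneg : Real.exp (-t) = y - s := by
    rw [Real.exp_neg, hexp]
    exact inv_eq_of_mul_eq_one_right (by nlinarith)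
  have hcosh_t : Real.cosh t = y := by
    rw [Real.cosh_eq, hexp, hexpneg]
    ring
  have ht0 : 0 ≤ t := Real.log_nonneg ha1
  have hxt : x ≤ t := by
    have : Real.cosh x ≤ Real.cosh t := by rw [hcosh_t]; exact hyx
    rw [Real.cosh_le_cosh, abs_of_nonneg hx0.le, abs_of_nonneg ht0] at this
    exact this
  have hT : (Polynomial.Chebyshev.T ℝ L).eval y = Real.cosh (L * t) := by
    rw [← hcosh_t, T_real_cosh t (L : ℤ)]
    norm_num
  rw [hT, Real.cosh_eq]
  have h1 : Real.exp ((L:ℝ) * x) ≤ Real.exp ((L:ℝ) * t) :=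
    Real.exp_le_exp.mpr (by nlinarith [Nat.cast_nonneg (α := ℝ) L])
  have h2 : 0 < Real.exp (-((L:ℝ) * t)) := Real.exp_pos _
  linarith
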